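/- Let θ ∈ (0,π) and φ ∈ ℝ with cos φ > 0, and set λ_+ = λ_+(θ,φ) = (1/√3)(cos(θ/2) + e^{iφ} sin(θ/2)). Then as m → ∞: (i) λ_+^{−m}·a_z(θ,φ)^m converges to the rank-one projector |+⟩⟨+| = (1/2)[[1,1],[1,1]]; and (ii) λ_+^{−2m}·a_z(θ,φ)^m·a_x(θ,φ)·a_z(θ,φ)^m and λ_+^{−2m}·a_z(θ,φ)^m·a_y(θ,φ)·a_z(θ,φ)^m both converge to the common limit (1/√3)(cos(θ/2) − (1/2) e^{iφ} sin(θ/2))·|+⟩⟨+|. -/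

import Mathlib

open Matrix Filter Real

noncomputable section

/-- Pauli matrix σ_x. -/
def σx : Matrix (Fin 2) (Fin 2) ℂ := !![0, 1; 1, 0]
/-- Pauli matrix σ_y. -/
def σy : Matrix (Fin 2) (Fin 2) ℂ := !![0, -Complex.I; Complex.I, 0]

/-- Toy-model junk-space operator `a_x(θ,φ)`. -/
def ax (θ φ : ℝ) : Matrix (Fin 2) (Fin 2) ℂ :=
  ((1 / Real.sqrt 3 : ℝ) : ℂ) •
    ((Real.cos (θ / 2) : ℂ) • (1 : Matrix (Fin 2) (Fin 2) ℂ)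
      + (Complex.exp (Complex.I * φ) * (Real.sin (θ / 2) : ℂ)) •
        ((-(1 / 2 : ℂ)) • σx + ((Real.sqrt 3 / 2 : ℝ) : ℂ) • σy))

/-- Toy-model junk-space operator `a_y(θ,φ)`. -/
def ay (θ φ : ℝ) : Matrix (Fin 2) (Fin 2) ℂ :=
  ((1 / Real.sqrt 3 : ℝ) : ℂ) •
    ((Real.cos (θ / 2) : ℂ) • (1 : Matrix (Fin 2) (Fin 2) ℂ)
      + (Complex.exp (Complex.I * φ) * (Real.sin (θ / 2) : ℂ)) •
        ((-(1 / 2 : ℂ)) • σx - ((Real.sqrt 3 / 2 : ℝ) : ℂ) • σy))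

/-- Toy-model junk-space operator `a_z(θ,φ)`. -/
def az (θ φ : ℝ) : Matrix (Fin 2) (Fin 2) ℂ :=
  ((1 / Real.sqrt 3 : ℝ) : ℂ) •
    ((Real.cos (θ / 2) : ℂ) • (1 : Matrix (Fin 2) (Fin 2) ℂ)
      + (Complex.exp (Complex.I * φ) * (Real.sin (θ / 2) : ℂ)) • σx)

/-- `λ_+(θ,φ) = (1/√3)(cos(θ/2) + e^{iφ} sin(θ/2))`. -/
def lamPlus (θ φ : ℝ) : ℂ :=
  ((1 / Real.sqrt 3 : ℝ) : ℂ) *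
    ((Real.cos (θ / 2) : ℂ) + Complex.exp (Complex.I * φ) * (Real.sin (θ / 2) : ℂ))

/-- The rank-one projector `|+⟩⟨+| = (1/2)[[1,1],[1,1]]`. -/
def plusProj : Matrix (Fin 2) (Fin 2) ℂ := (1 / 2 : ℂ) • !![1, 1; 1, 1]


namespace ToyAux

/-- `λ_-(θ,φ)`. -/
def lamMinus (θ φ : ℝ) : ℂ :=
  ((1 / Real.sqrt 3 : ℝ) : ℂ) *
    ((Real.cos (θ / 2) : ℂ) - Complex.exp (Complex.I * φ) * (Real.sin (θ / 2) : ℂ))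

lemma PP' : plusProj * plusProj = plusProj := by
  ext i j
  fin_cases i <;> fin_cases j <;>
    simp [plusProj, Matrix.mul_apply, Fin.sum_univ_succ] <;> ring

lemma PQ' : plusProj * (1 - plusProj) = 0 := by
  simp [Matrix.mul_sub, PP']

lemma QP' : (1 - plusProj) * plusProj = 0 := by
  simp [Matrix.sub_mul, PP']

lemma QQ' : (1 - plusProj) * (1 - plusProj) = 1 - plusProj := by
  simp [Matrix.sub_mul, Matrix.mul_sub, PP']

lemma az_decomp (θ φ : ℝ) :
    az θ φ = lamPlus θ φ • plusProj + lamMinus θ φ • (1 - plusProj) := by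
  ext i j
  fin_cases i <;> fin_cases j <;>
    simp [az, lamPlus, lamMinus, plusProj, σx, Matrix.one_apply] <;> ring

lemma az_pow (θ φ : ℝ) (m : ℕ) :
    az θ φ ^ m = (lamPlus θ φ ^ m) • plusProj + (lamMinus θ φ ^ m) • (1 - plusProj) := by
  induction m with
  | zero => simp
  | succ m ih =>
    rw [pow_succ, ih, az_decomp]
    simp only [Matrix.add_mul, Matrix.mul_add, Matrix.smul_mul, Matrix.mul_smul,
      smul_smul, PP', PQ', QP', QQ', smul_zero, add_zero, zero_add, pow_succ]
    rw [mul_comm (lamPlus θ φ), mul_comm (lamMinus θ φ)]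

lemma norm_lt (θ φ : ℝ) (hθ : θ ∈ Set.Ioo 0 π) (hφ : Real.cos φ > 0) :
    Complex.normSq (lamMinus θ φ) < Complex.normSq (lamPlus θ φ) := by
  obtain ⟨h1, h2⟩ := hθ
  have hc : 0 < Real.cos (θ / 2) := by
    apply Real.cos_pos_of_mem_Ioo
    constructor <;> [linarith [Real.pi_pos]; linarith]
  have hs : 0 < Real.sin (θ / 2) := by
    apply Real.sin_pos_of_pos_of_lt_pi <;> linarith [Real.pi_pos]
  have he : Complex.exp (Complex.I * φ)
      = (Real.cos φ : ℂ) + (Real.sin φ : ℂ) * Complex.I := by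
    rw [mul_comm, Complex.exp_mul_I, Complex.ofReal_cos, Complex.ofReal_sin]
  have h3 : (0:ℝ) < Real.sqrt 3 := by positivity
  simp only [lamPlus, lamMinus, he, Complex.normSq_apply, Complex.add_re, Complex.add_im,
    Complex.sub_re, Complex.sub_im, Complex.mul_re, Complex.mul_im, Complex.ofReal_re,
    Complex.ofReal_im, Complex.I_re, Complex.I_im]
  have hi : 0 < (Real.sqrt 3)⁻¹ ^ 2 := by positivity
  ring_nf at hc hs ⊢
  nlinarith [mul_pos hi (mul_pos (mul_pos hc hs) hφ)]

lemma lamPlus_ne (θ φ : ℝ) (hθ : θ ∈ Set.Ioo 0 π) (hφ : Real.cos φ > 0) :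
    lamPlus θ φ ≠ 0 := by
  have h := norm_lt θ φ hθ hφ
  have h2 : 0 < Complex.normSq (lamPlus θ φ) :=
    lt_of_le_of_lt (Complex.normSq_nonneg _) h
  intro h0
  rw [h0] at h2
  simp at h2

lemma ratio_norm_lt (θ φ : ℝ) (hθ : θ ∈ Set.Ioo 0 π) (hφ : Real.cos φ > 0) :
    ‖lamMinus θ φ / lamPlus θ φ‖ < 1 := by
  have h := norm_lt θ φ hθ hφ
  have hne := lamPlus_ne θ φ hθ hφ
  rw [norm_div, div_lt_one (by simpa using hne)]
  have h1 := Complex.normSq_eq_norm_sq (lamMinus θ φ)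
  have h2 := Complex.normSq_eq_norm_sq (lamPlus θ φ)
  nlinarith [norm_nonneg (lamMinus θ φ), norm_nonneg (lamPlus θ φ)]

lemma PsxP : plusProj * σx * plusProj = plusProj := by
  have h : σx * plusProj = plusProj := by
    ext i j
    fin_cases i <;> fin_cases j <;>
      simp [plusProj, σx, Matrix.mul_apply, Fin.sum_univ_succ]
  rw [mul_assoc, h, PP']

lemma PsyP : plusProj * σy * plusProj = 0 := by
  ext i j
  fin_cases i <;> fin_cases j <;>
    simp [plusProj, σy, Matrix.mul_apply, Fin.sum_univ_succ]

lemma P_ax_P (θ φ : ℝ) :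
    plusProj * ax θ φ * plusProj
      = (((1 / Real.sqrt 3 : ℝ) : ℂ) *
          ((Real.cos (θ / 2) : ℂ) - (1 / 2 : ℂ) * Complex.exp (Complex.I * φ)
            * (Real.sin (θ / 2) : ℂ))) • plusProj := by
  have h1 : plusProj * (1 : Matrix (Fin 2) (Fin 2) ℂ) * plusProj = plusProj := by
    rw [mul_one, PP']
  rw [ax]
  simp only [Matrix.mul_add, Matrix.add_mul, Matrix.mul_smul, Matrix.smul_mul,
    h1, PsxP, PsyP, smul_zero, add_zero]
  module

lemma P_ay_P (θ φ : ℝ) :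
    plusProj * ay θ φ * plusProj
      = (((1 / Real.sqrt 3 : ℝ) : ℂ) *
          ((Real.cos (θ / 2) : ℂ) - (1 / 2 : ℂ) * Complex.exp (Complex.I * φ)
            * (Real.sin (θ / 2) : ℂ))) • plusProj := by
  have h1 : plusProj * (1 : Matrix (Fin 2) (Fin 2) ℂ) * plusProj = plusProj := by
    rw [mul_one, PP']
  rw [ay]
  simp only [Matrix.mul_add, Matrix.add_mul, Matrix.mul_sub, Matrix.sub_mul,
    Matrix.mul_smul, Matrix.smul_mul, h1, PsxP, PsyP, smul_zero, add_zero, sub_zero]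
  module

theorem main (θ φ : ℝ) (hθ : θ ∈ Set.Ioo 0 π) (hφ : Real.cos φ > 0)
    (B : Matrix (Fin 2) (Fin 2) ℂ) :
    Tendsto (fun m : ℕ => (lamPlus θ φ ^ m)⁻¹ • az θ φ ^ m) atTop (nhds plusProj)
    ∧ Tendsto (fun m : ℕ => (lamPlus θ φ ^ (2 * m))⁻¹ • (az θ φ ^ m * B * az θ φ ^ m))
        atTop (nhds (plusProj * B * plusProj)) := by
  have hne := lamPlus_ne θ φ hθ hφ
  have hr := ratio_norm_lt θ φ hθ hφ
  set r := lamMinus θ φ / lamPlus θ φ with hrdef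
  have h0 : Tendsto (fun m : ℕ => r ^ m) atTop (nhds 0) :=
    tendsto_pow_atTop_nhds_zero_of_norm_lt_one hr
  constructor
  · have key1 : ∀ m : ℕ, (lamPlus θ φ ^ m)⁻¹ • az θ φ ^ m
        = plusProj + r ^ m • (1 - plusProj) := by
      intro m
      rw [az_pow, smul_add, smul_smul, smul_smul,
        inv_mul_cancel₀ (pow_ne_zero m hne), one_smul, hrdef, div_pow,
        div_eq_mul_inv, mul_comm]
    simp only [key1]
    have := (h0.smul_const ((1 : Matrix (Fin 2) (Fin 2) ℂ) - plusProj)).const_add plusProj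
    simpa using this
  · have key2 : ∀ m : ℕ,
        (lamPlus θ φ ^ (2 * m))⁻¹ • (az θ φ ^ m * B * az θ φ ^ m)
        = plusProj * B * plusProj
          + r ^ m • (plusProj * B * (1 - plusProj) + (1 - plusProj) * B * plusProj)
          + (r ^ m * r ^ m) • ((1 - plusProj) * B * (1 - plusProj)) := by
      intro m
      have hp : lamPlus θ φ ^ m ≠ 0 := pow_ne_zero m hne
      rw [az_pow, two_mul, pow_add, hrdef, div_pow]
      simp only [Matrix.add_mul, Matrix.mul_add, Matrix.smul_mul, Matrix.mul_smul,
        smul_add, smul_smul]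
      match_scalars <;> field_simp <;> ring
    simp only [key2]
    have t1 := h0.smul_const (plusProj * B * (1 - plusProj) + (1 - plusProj) * B * plusProj)
    have t2 := (h0.mul h0).smul_const ((1 - plusProj) * B * (1 - plusProj))
    have := (((tendsto_const_nhds (x := plusProj * B * plusProj)
      (f := atTop (α := ℕ))).add t1).add t2)
    simpa using this

end ToyAux

/-- For `θ ∈ (0,π)` and `cos φ > 0`: (i) `λ_+⁻ᵐ a_zᵐ → |+⟩⟨+|`; and (ii) the renormalized
    operators `λ_+⁻²ᵐ a_zᵐ a_x a_zᵐ` and `λ_+⁻²ᵐ a_zᵐ a_y a_zᵐ` converge to the common limit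
    `(1/√3)(cos(θ/2) − (1/2)e^{iφ} sin(θ/2))·|+⟩⟨+|`. -/
theorem toy_model_rg_fixed_point (θ φ : ℝ) (hθ : θ ∈ Set.Ioo 0 π)
    (hφ : Real.cos φ > 0) :
    Tendsto (fun m : ℕ => (lamPlus θ φ ^ m)⁻¹ • az θ φ ^ m) atTop (nhds plusProj)
    ∧ Tendsto (fun m : ℕ => (lamPlus θ φ ^ (2 * m))⁻¹ • (az θ φ ^ m * ax θ φ * az θ φ ^ m))
        atTop
        (nhds ((((1 / Real.sqrt 3 : ℝ) : ℂ) *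
          ((Real.cos (θ / 2) : ℂ) - (1 / 2 : ℂ) * Complex.exp (Complex.I * φ)
            * (Real.sin (θ / 2) : ℂ))) • plusProj))
    ∧ Tendsto (fun m : ℕ => (lamPlus θ φ ^ (2 * m))⁻¹ • (az θ φ ^ m * ay θ φ * az θ φ ^ m))
        atTop
        (nhds ((((1 / Real.sqrt 3 : ℝ) : ℂ) *
          ((Real.cos (θ / 2) : ℂ) - (1 / 2 : ℂ) * Complex.exp (Complex.I * φ)
            * (Real.sin (θ / 2) : ℂ))) • plusProj)) := by
  refine ⟨(ToyAux.main θ φ hθ hφ 1).1, ?_, ?_⟩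
  · have h := (ToyAux.main θ φ hθ hφ (ax θ φ)).2
    rwa [ToyAux.P_ax_P] at h
  · have h := (ToyAux.main θ φ hθ hφ (ay θ φ)).2
    rwa [ToyAux.P_ay_P] at h

end
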